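/- (Bounds on the fundamental solution of the linearised operator.) There exists a constant C > 0 such that for every α ∈ (0, π/2] and every x ∈ ℝ with x ≠ 0, the following hold for the integrals I_n(α, x) = ∫_0^∞ tⁿ e^{−t|x|}/(t² sin²α + (t² − 1)²) dt, n = 1, 2, 3: (i) 0 ≤ (sin α/π)·I₁(α, x) ≤ C sin α/(1 + x²) + C e^{−|x|/2}; (ii) 0 ≤ (sin α/π)·I₂(α, x) ≤ C sin α/(1 + |x|³) + C e^{−|x|/2}; (iii) 0 ≤ (sin α/π)·I₃(α, x) ≤ C sin α·|log|x||/(1 + x⁴·|log|x||) + C e^{−|x|/2}. -/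

import Mathlib

open Real MeasureTheory Filter Topology
open scoped ENNReal NNReal

noncomputable section

/-- `k = min {h, 1}`. -/
def kparam (h : ℝ) : ℝ := min h 1

/-- `α = arccos k ∈ [0, π/2]`. -/
def alphaParam (h : ℝ) : ℝ := Real.arccos (kparam h)

/-- The anisotropy potential `W_h(θ) = (1/2)(cos²θ − 2h cos θ + 2hk − k²)`. -/
def Wpot (h θ : ℝ) : ℝ :=
  (1/2) * ((Real.cos θ)^2 - 2*h*Real.cos θ + 2*h*(kparam h) - (kparam h)^2)

/-- The set `2πℤ + {−α, α}` of allowed limits at `±∞`. -/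
def limSet (h : ℝ) : Set ℝ :=
  {y | ∃ n : ℤ, y = 2*Real.pi*n + alphaParam h ∨ y = 2*Real.pi*n - alphaParam h}

/-- The total energy `E_h(φ)`, valued in `[0, ∞]`:
exchange + anisotropy energy plus the stray-field (homogeneous `H^{1/2}`) energy. -/
def energy (h : ℝ) (φ : ℝ → ℝ) : ℝ≥0∞ :=
  ENNReal.ofReal (1/2) *
      (∫⁻ x : ℝ, ENNReal.ofReal ((deriv φ x)^2 + 2 * Wpot h (φ x))) +
    ENNReal.ofReal (1/(4*Real.pi)) *
      (∫⁻ s : ℝ, ∫⁻ t : ℝ,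
        ENNReal.ofReal ((Real.cos (φ s) - Real.cos (φ t))^2 / (s - t)^2))

/-- An admissible phase: `C¹`, limits at `±∞` in `2πℤ + {−α, α}`, finite energy. -/
def Admissible (h : ℝ) (φ : ℝ → ℝ) : Prop :=
  ContDiff ℝ 1 φ ∧
    (∃ L ∈ limSet h, Tendsto φ atTop (𝓝 L)) ∧
    (∃ L ∈ limSet h, Tendsto φ atBot (𝓝 L)) ∧
    energy h φ < ⊤

/-- The winding number `deg(φ) = (φ(+∞) − φ(−∞))/(2π)`. -/
def deg (φ : ℝ → ℝ) : ℝ :=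
  (limUnder atTop φ - limUnder atBot φ) / (2*Real.pi)

/-- `𝒜_h(d)`: admissible phases of winding number `d`. -/
def AA (h d : ℝ) : Set (ℝ → ℝ) := {φ | Admissible h φ ∧ deg φ = d}

/-- `ℰ_h(d) = inf {E_h(φ) : φ ∈ 𝒜_h(d)}`. -/
def Einf (h d : ℝ) : ℝ≥0∞ := ⨅ φ ∈ AA h d, energy h φ

/-- `D_α = {n + j·α/π : n ∈ ℤ, j ∈ {−1, 0, 1}}`. -/
def Dset (h : ℝ) : Set ℝ :=
  {d | ∃ n j : ℤ, (j = -1 ∨ j = 0 ∨ j = 1) ∧ d = n + j * alphaParam h / Real.pi}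

/-- The integral `I_n(α, x) = ∫_0^∞ tⁿ e^{−t|x|}/(t² sin²α + (t² − 1)²) dt`. -/
def Ifun (n : ℕ) (α x : ℝ) : ℝ :=
  ∫ t in Set.Ioi (0:ℝ),
    t^n * Real.exp (-t*|x|) / (t^2 * (Real.sin α)^2 + (t^2 - 1)^2)

section Helpers
open Set

noncomputable def Fi (n : ℕ) (s y t : ℝ) : ℝ :=
  t^n * Real.exp (-t*y) / (t^2*s^2 + (t^2-1)^2)

lemma denom_pos {s : ℝ} (hs : 0 < s) (t : ℝ) : 0 < t^2*s^2 + (t^2-1)^2 := by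
  rcases eq_or_ne t 0 with h | h
  · norm_num [h]
  · have h1 : 0 < t^2 := pow_two_pos_of_ne_zero h
    have h2 : 0 < s^2 := pow_two_pos_of_ne_zero hs.ne'
    nlinarith [sq_nonneg (t^2-1)]

lemma Fi_nonneg {n : ℕ} {s y : ℝ} {t : ℝ} (ht : 0 ≤ t) : 0 ≤ Fi n s y t := by
  unfold Fi; positivity

lemma Fi_cont {n : ℕ} {s y : ℝ} (hs : 0 < s) : Continuous (Fi n s y) := by
  unfold Fi
  exact Continuous.div (by fun_prop) (by fun_prop) fun t => (denom_pos hs t).ne'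

lemma Fi_le_tail3 {n : ℕ} (hn : n ≤ 3) {s y t : ℝ} (hs : 0 < s) (ht : 2 ≤ t) :
    Fi n s y t ≤ 4 * Real.exp (-t*y) / t := by
  have ht1 : (1:ℝ) ≤ t := by linarith
  have h4 : (4:ℝ) ≤ t^2 := by nlinarith
  have hD : t^4/4 ≤ t^2*s^2 + (t^2-1)^2 := by nlinarith [sq_nonneg (t^2-2), sq_nonneg (t*s)]
  have hnum : t^n * Real.exp (-t*y) ≤ t^3 * Real.exp (-t*y) :=
    mul_le_mul_of_nonneg_right (pow_le_pow_right₀ ht1 hn) (Real.exp_nonneg _)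
  have ht0 : (0:ℝ) < t := by linarith
  calc Fi n s y t ≤ (t^3 * Real.exp (-t*y)) / (t^4/4) :=
        div_le_div₀ (by positivity) hnum (by positivity) hD
    _ = 4 * Real.exp (-t*y) / t := by field_simp

lemma Fi_le_tail2 {n : ℕ} (hn : n ≤ 2) {s y t : ℝ} (hs : 0 < s) (ht : 2 ≤ t) :
    Fi n s y t ≤ 4 * Real.exp (-t*y) / t^2 := by
  have ht1 : (1:ℝ) ≤ t := by linarith
  have h4 : (4:ℝ) ≤ t^2 := by nlinarith
  have hD : t^4/4 ≤ t^2*s^2 + (t^2-1)^2 := by nlinarith [sq_nonneg (t^2-2), sq_nonneg (t*s)]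
  have hnum : t^n * Real.exp (-t*y) ≤ t^2 * Real.exp (-t*y) :=
    mul_le_mul_of_nonneg_right (pow_le_pow_right₀ ht1 hn) (Real.exp_nonneg _)
  have ht0 : (0:ℝ) < t := by linarith
  calc Fi n s y t ≤ (t^2 * Real.exp (-t*y)) / (t^4/4) :=
        div_le_div₀ (by positivity) hnum (by positivity) hD
    _ = 4 * Real.exp (-t*y) / t^2 := by field_simp

lemma intOn_Ioc02 {n : ℕ} {s y : ℝ} (hs : 0 < s) : IntegrableOn (Fi n s y) (Ioc (0:ℝ) 2) :=
  (Fi_cont hs).integrableOn_Ioc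

lemma intOn_expy {y : ℝ} (hy : 0 < y) (a : ℝ) :
    IntegrableOn (fun t : ℝ => Real.exp (-t*y)) (Ioi a) := by
  have := exp_neg_integrableOn_Ioi a hy
  simpa [mul_comm] using this

lemma integral_expy {y : ℝ} (hy : 0 < y) (a : ℝ) :
    ∫ t in Ioi a, Real.exp (-t*y) = Real.exp (-a*y)/y := by
  have h := integral_comp_mul_right_Ioi (fun u => Real.exp (-u)) a hy
  simp only [smul_eq_mul] at h
  rw [show (fun t : ℝ => Real.exp (-t*y)) = fun t : ℝ => Real.exp (-(t*y)) by ext t; ring_nf]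
  rw [h, integral_exp_neg_Ioi]
  rw [neg_mul]
  ring

lemma intOn_tail {n : ℕ} (hn : n ≤ 3) {s y : ℝ} (hs : 0 < s) (hy : 0 < y) :
    IntegrableOn (Fi n s y) (Ioi (2:ℝ)) := by
  apply Integrable.mono' (((intOn_expy hy 2).const_mul 2))
    ((Fi_cont hs).aestronglyMeasurable.restrict)
  filter_upwards [ae_restrict_mem measurableSet_Ioi] with t ht
  have ht2 : (2:ℝ) ≤ t := le_of_lt ht
  rw [Real.norm_of_nonneg (Fi_nonneg (by linarith))]
  calc Fi n s y t ≤ 4 * Real.exp (-t*y) / t := Fi_le_tail3 hn hs ht2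
    _ ≤ 2 * Real.exp (-t*y) := by
        rw [div_le_iff₀ (by linarith : (0:ℝ) < t)]
        nlinarith [Real.exp_nonneg (-t*y)]

lemma pow_le_six_mul_exp {u : ℝ} (hu : 0 ≤ u) {n : ℕ} (hn : n ≤ 3) : u^n ≤ 6 * Real.exp u := by
  have h := Real.sum_le_exp_of_nonneg hu (n+1)
  have h2 : u^n / n.factorial ≤ ∑ i ∈ Finset.range (n+1), u^i / i.factorial :=
    Finset.single_le_sum (f := fun i => u^i / i.factorial) (fun i _ => by positivity)
      (Finset.self_mem_range_succ n)
  have h3 : (n.factorial : ℝ) ≤ 6 := by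
    interval_cases n <;> norm_num [Nat.factorial]
  have h4 : (0:ℝ) < n.factorial := by positivity
  have h5 : u^n ≤ Real.exp u * n.factorial := by
    rw [← div_le_iff₀ h4]; exact h2.trans h
  nlinarith [Real.exp_pos u]

lemma bndA {n : ℕ} (hn : n ≤ 3) {s y : ℝ} (hs : 0 < s) (hy : 0 < y) :
    ∫ t in Ioc (0:ℝ) (1/2), Fi n s y t ≤ 180/(1+y^(n+1)) := by
  have hcont : IntegrableOn (fun t => t^n * Real.exp (-t*y)) (Ioc (0:ℝ) (1/2)) :=
    (Continuous.integrableOn_Ioc (by fun_prop))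
  have hstep : ∫ t in Ioc (0:ℝ) (1/2), Fi n s y t
      ≤ ∫ t in Ioc (0:ℝ) (1/2), (16/9) * (t^n * Real.exp (-t*y)) := by
    apply setIntegral_mono_on ((intOn_Ioc02 hs).mono_set (by
      intro t ht; exact ⟨ht.1, ht.2.trans (by norm_num)⟩)) (hcont.const_mul _)
      measurableSet_Ioc
    intro t ht
    have ht0 : 0 < t := ht.1
    have ht2 : t ≤ 1/2 := ht.2
    have htsq : t^2 ≤ 1/4 := by nlinarith
    have h34 : (3:ℝ)/4 ≤ 1 - t^2 := by linarith
    have h99 : (3/4:ℝ)*(3/4) ≤ (1-t^2)*(1-t^2) := mul_le_mul h34 h34 (by norm_num) (by linarith)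
    have hD : (9:ℝ)/16 ≤ t^2*s^2 + (t^2-1)^2 := by nlinarith [mul_nonneg (sq_nonneg t) (sq_nonneg s)]
    calc Fi n s y t ≤ (t^n * Real.exp (-t*y)) / (9/16) :=
          div_le_div₀ (by positivity) le_rfl (by norm_num) hD
      _ = (16/9) * (t^n * Real.exp (-t*y)) := by ring
  have hJa : ∫ t in Ioc (0:ℝ) (1/2), t^n * Real.exp (-t*y) ≤ 1/2 := by
    have : ∫ t in Ioc (0:ℝ) (1/2), t^n * Real.exp (-t*y) ≤ ∫ _t in Ioc (0:ℝ) (1/2), (1:ℝ) := by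
      apply setIntegral_mono_on hcont (integrableOn_const (by simp))
        measurableSet_Ioc
      intro t ht
      have h1 : t^n ≤ 1 := pow_le_one₀ ht.1.le (ht.2.trans (by norm_num))
      have h2 : Real.exp (-t*y) ≤ 1 := Real.exp_le_one_iff.mpr (by nlinarith [ht.1])
      nlinarith [pow_nonneg ht.1.le n, Real.exp_nonneg (-t*y)]
    simpa using this
  have hJb : ∫ t in Ioc (0:ℝ) (1/2), t^n * Real.exp (-t*y) ≤ 96/y^(n+1) := by
    have hy2 : 0 < y/2 := by linarith
    have hp : ∀ t ∈ Ioc (0:ℝ) (1/2), t^n * Real.exp (-t*y) ≤ 6*(2/y)^n * Real.exp (-t*(y/2)) := by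
      intro t ht
      have ht0 : 0 ≤ t := ht.1.le
      have key : (t*(y/2))^n ≤ 6 * Real.exp (t*(y/2)) := pow_le_six_mul_exp (by positivity) hn
      have hne : Real.exp (-t*y) = Real.exp (-t*(y/2)) * Real.exp (-t*(y/2)) := by
        rw [← Real.exp_add]; ring_nf
      have h6 : t^n * Real.exp (-t*(y/2)) ≤ 6*(2/y)^n := by
        have hepos := Real.exp_pos (t*(y/2))
        have : t^n * (y/2)^n ≤ 6 * Real.exp (t*(y/2)) := by
          rw [← mul_pow]; exact key
        rw [show -t*(y/2) = -(t*(y/2)) by ring, Real.exp_neg]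
        rw [show (6:ℝ)*(2/y)^n = 6 / (y/2)^n by rw [div_pow]; field_simp; rw [← mul_pow]; congr 1; ring]
        rw [mul_inv_le_iff₀ hepos, div_mul_eq_mul_div, le_div_iff₀ (by positivity)]
        linarith
      calc t^n * Real.exp (-t*y) = (t^n * Real.exp (-t*(y/2))) * Real.exp (-t*(y/2)) := by
            rw [hne]; ring
        _ ≤ 6*(2/y)^n * Real.exp (-t*(y/2)) :=
            mul_le_mul_of_nonneg_right h6 (Real.exp_nonneg _)
    calc ∫ t in Ioc (0:ℝ) (1/2), t^n * Real.exp (-t*y)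
        ≤ ∫ t in Ioc (0:ℝ) (1/2), 6*(2/y)^n * Real.exp (-t*(y/2)) := by
          apply setIntegral_mono_on hcont
            ((((intOn_expy hy2 0).mono_set Ioc_subset_Ioi_self).const_mul _)) measurableSet_Ioc hp
      _ ≤ ∫ t in Ioi (0:ℝ), 6*(2/y)^n * Real.exp (-t*(y/2)) := by
          apply setIntegral_mono_set ((intOn_expy hy2 0).const_mul _)
          · filter_upwards with t using by positivity
          · exact HasSubset.Subset.eventuallyLE Ioc_subset_Ioi_self
      _ = 6*(2/y)^n * (Real.exp (-0*(y/2))/(y/2)) := by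
          rw [integral_const_mul, integral_expy hy2]
      _ ≤ 96/y^(n+1) := by
          rw [show (-0:ℝ)*(y/2) = 0 by ring, Real.exp_zero]
          have h2n : (2:ℝ)^n ≤ 8 := by
            calc (2:ℝ)^n ≤ 2^3 := pow_le_pow_right₀ (by norm_num) hn
              _ = 8 := by norm_num
          have hyn : 0 < y^n := pow_pos hy n
          have heq : 6*(2/y)^n * ((1:ℝ)/(y/2)) = 6*(2^n*2)/y^(n+1) := by
            rw [div_pow, pow_succ]; field_simp
          rw [heq]
          gcongr
          nlinarith
  -- combine
  set J := ∫ t in Ioc (0:ℝ) (1/2), t^n * Real.exp (-t*y) with hJdef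
  have hYpos : 0 < y^(n+1) := pow_pos hy _
  have hJY : J * y^(n+1) ≤ 96 := by
    rw [← le_div_iff₀ hYpos]; exact hJb
  have hJnn : 0 ≤ J := by
    apply setIntegral_nonneg measurableSet_Ioc
    intro t ht; exact mul_nonneg (pow_nonneg ht.1.le n) (Real.exp_nonneg _)
  have hstep2 : ∫ t in Ioc (0:ℝ) (1/2), Fi n s y t ≤ (16/9) * J := by
    rw [hJdef, ← integral_const_mul]; exact hstep
  refine hstep2.trans ?_
  rw [le_div_iff₀ (by positivity)]
  nlinarith

lemma cauchy_integrable {s : ℝ} (hs : 0 < s) : Integrable (fun u : ℝ => (s^2+u^2)⁻¹) := by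
  have h1 : Integrable (fun v : ℝ => (1+v^2)⁻¹) := integrable_inv_one_add_sq
  have h2 : Integrable (fun u : ℝ => (1+(u/s)^2)⁻¹) := h1.comp_div hs.ne'
  have h3 := h2.const_mul (s^2)⁻¹
  apply h3.congr
  filter_upwards with u
  rw [← mul_inv]
  congr 1
  field_simp

lemma cauchy_integral {s : ℝ} (hs : 0 < s) : ∫ u : ℝ, (s^2+u^2)⁻¹ = π/s := by
  have h0 : (fun u : ℝ => (s^2+u^2)⁻¹) = fun u : ℝ => (s^2)⁻¹ * (1+(u/s)^2)⁻¹ := by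
    ext u; rw [← mul_inv]; congr 1; field_simp
  rw [h0, integral_const_mul]
  have h := MeasureTheory.Measure.integral_comp_div (fun v : ℝ => (1+v^2)⁻¹) s
  rw [h, integral_univ_inv_one_add_sq, abs_of_pos hs, smul_eq_mul]
  field_simp

lemma bndB {n : ℕ} (hn : n ≤ 3) {s y : ℝ} (hs : 0 < s) (hy : 0 < y) :
    ∫ t in Ioc (1/2:ℝ) 2, Fi n s y t ≤ 32*π*Real.exp (-y/2)/s := by
  have hint : Integrable (fun t : ℝ => (s^2+(t-1)^2)⁻¹) := (cauchy_integrable hs).comp_sub_right 1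
  have hstep : ∫ t in Ioc (1/2:ℝ) 2, Fi n s y t
      ≤ ∫ t in Ioc (1/2:ℝ) 2, 32*Real.exp (-y/2) * (s^2+(t-1)^2)⁻¹ := by
    apply setIntegral_mono_on ((intOn_Ioc02 hs).mono_set (by
        intro t ht; exact ⟨lt_trans (by norm_num) ht.1, ht.2⟩))
      ((hint.integrableOn).const_mul _) measurableSet_Ioc
    intro t ht
    have ht1 : 1/2 < t := ht.1
    have ht2 : t ≤ 2 := ht.2
    have hnum : t^n * Real.exp (-t*y) ≤ 8 * Real.exp (-y/2) := by
      have h1 : t^n ≤ 2^n := pow_le_pow_left₀ (by linarith) ht2 n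
      have h2 : (2:ℝ)^n ≤ 8 := by
        calc (2:ℝ)^n ≤ 2^3 := pow_le_pow_right₀ (by norm_num) hn
          _ = 8 := by norm_num
      have h3 : Real.exp (-t*y) ≤ Real.exp (-y/2) := by
        apply Real.exp_le_exp.mpr; nlinarith
      calc t^n * Real.exp (-t*y) ≤ 8 * Real.exp (-t*y) := by
            nlinarith [Real.exp_nonneg (-t*y)]
        _ ≤ 8 * Real.exp (-y/2) := by linarith
    have ha : s^2/4 ≤ t^2*s^2 := by
      nlinarith [mul_nonneg (sq_nonneg s) (by nlinarith : (0:ℝ) ≤ t^2 - 1/4)]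
    have hb : (t-1)^2/4 ≤ (t^2-1)^2 := by
      nlinarith [mul_nonneg (sq_nonneg (t-1)) (by nlinarith : (0:ℝ) ≤ (t+1)^2 - 1/4)]
    have hD : (1/4) * (s^2+(t-1)^2) ≤ t^2*s^2 + (t^2-1)^2 := by linarith
    have hDpos : 0 < (1/4) * (s^2+(t-1)^2) := by positivity
    calc Fi n s y t ≤ (8 * Real.exp (-y/2)) / ((1/4) * (s^2+(t-1)^2)) :=
          div_le_div₀ (by positivity) hnum hDpos hD
      _ = 32*Real.exp (-y/2) * (s^2+(t-1)^2)⁻¹ := by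
          rw [div_eq_mul_inv, mul_inv]
          have : ((1:ℝ)/4)⁻¹ = 4 := by norm_num
          rw [this]; ring
  refine hstep.trans ?_
  rw [integral_const_mul]
  have h1 : ∫ t in Ioc (1/2:ℝ) 2, (s^2+(t-1)^2)⁻¹ ≤ ∫ t : ℝ, (s^2+(t-1)^2)⁻¹ := by
    apply setIntegral_le_integral hint
    filter_upwards with t using by positivity
  have h2 : ∫ t : ℝ, (s^2+(t-1)^2)⁻¹ = π/s := by
    rw [integral_sub_right_eq_self (fun u : ℝ => (s^2+u^2)⁻¹) 1]
    exact cauchy_integral hs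
  calc 32*Real.exp (-y/2) * ∫ t in Ioc (1/2:ℝ) 2, (s^2+(t-1)^2)⁻¹
      ≤ 32*Real.exp (-y/2) * (π/s) := by
        apply mul_le_mul_of_nonneg_left (h1.trans h2.le) (by positivity)
    _ = 32*π*Real.exp (-y/2)/s := by ring

lemma bndC12 {n : ℕ} (hn : n ≤ 2) {s y : ℝ} (hs : 0 < s) (hy : 0 < y) :
    ∫ t in Ioi (2:ℝ), Fi n s y t ≤ 2*Real.exp (-y/2) := by
  have hrint : IntegrableOn (fun t : ℝ => t^(-2:ℝ)) (Ioi (2:ℝ)) :=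
    integrableOn_Ioi_rpow_of_lt (by norm_num) (by norm_num)
  have hstep : ∫ t in Ioi (2:ℝ), Fi n s y t
      ≤ ∫ t in Ioi (2:ℝ), 4*Real.exp (-2*y) * t^(-2:ℝ) := by
    apply setIntegral_mono_on (intOn_tail (hn.trans (by norm_num)) hs hy)
      (hrint.const_mul _) measurableSet_Ioi
    intro t ht
    have ht2 : (2:ℝ) ≤ t := le_of_lt ht
    have ht0 : (0:ℝ) < t := by linarith
    have hrp : t^(-2:ℝ) = (t^2)⁻¹ := by
      rw [show (-2:ℝ) = -(2:ℕ) by norm_num, Real.rpow_neg ht0.le, Real.rpow_natCast]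
    calc Fi n s y t ≤ 4 * Real.exp (-t*y) / t^2 := Fi_le_tail2 hn hs ht2
      _ ≤ 4*Real.exp (-2*y) * t^(-2:ℝ) := by
          rw [hrp, div_eq_mul_inv]
          apply mul_le_mul_of_nonneg_right _ (by positivity)
          have : Real.exp (-t*y) ≤ Real.exp (-2*y) := Real.exp_le_exp.mpr (by nlinarith)
          linarith
  refine hstep.trans ?_
  rw [integral_const_mul, integral_Ioi_rpow_of_lt (by norm_num) (by norm_num)]
  have h1 : -(2:ℝ)^((-2:ℝ)+1)/((-2:ℝ)+1) = 1/2 := by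
    rw [show (-2:ℝ)+1 = -1 by norm_num, Real.rpow_neg_one]
    norm_num
  rw [h1]
  have h2 : Real.exp (-2*y) ≤ Real.exp (-y/2) := Real.exp_le_exp.mpr (by linarith)
  nlinarith [Real.exp_nonneg (-2*y)]

lemma bndC3a {s y : ℝ} (hs : 0 < s) (hy : 1/2 ≤ y) :
    ∫ t in Ioi (2:ℝ), Fi 3 s y t ≤ 4*Real.exp (-y/2) := by
  have hy0 : 0 < y := by linarith
  have hstep : ∫ t in Ioi (2:ℝ), Fi 3 s y t ≤ ∫ t in Ioi (2:ℝ), 2 * Real.exp (-t*y) := by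
    apply setIntegral_mono_on (intOn_tail le_rfl hs hy0)
      ((intOn_expy hy0 2).const_mul _) measurableSet_Ioi
    intro t ht
    have ht2 : (2:ℝ) ≤ t := le_of_lt ht
    calc Fi 3 s y t ≤ 4 * Real.exp (-t*y) / t := Fi_le_tail3 le_rfl hs ht2
      _ ≤ 2 * Real.exp (-t*y) := by
          rw [div_le_iff₀ (by linarith : (0:ℝ) < t)]
          nlinarith [Real.exp_nonneg (-t*y)]
  refine hstep.trans ?_
  rw [integral_const_mul, integral_expy hy0]
  have h2 : Real.exp (-2*y) ≤ Real.exp (-y/2) := Real.exp_le_exp.mpr (by linarith)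
  have h3 : Real.exp (-2*y)/y ≤ 2*Real.exp (-2*y) := by
    rw [div_le_iff₀ hy0]
    nlinarith [Real.exp_nonneg (-2*y)]
  nlinarith [Real.exp_nonneg (-2*y)]

lemma bndC3b {s y : ℝ} (hs : 0 < s) (hy : 0 < y) (hy2 : y < 1/2) :
    ∫ t in Ioi (2:ℝ), Fi 3 s y t ≤ 4*(-Real.log y) + 2 := by
  have hyinv : (2:ℝ) < 1/y := by
    rw [lt_div_iff₀ hy]; linarith
  have hsplit : Ioc (2:ℝ) (1/y) ∪ Ioi (1/y) = Ioi 2 := Ioc_union_Ioi_eq_Ioi hyinv.le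
  have hint := intOn_tail le_rfl hs hy (n := 3) (s := s) (y := y)
  have hint1 : IntegrableOn (Fi 3 s y) (Ioc (2:ℝ) (1/y)) :=
    hint.mono_set (fun t ht => ht.1)
  have hint2 : IntegrableOn (Fi 3 s y) (Ioi (1/y)) :=
    hint.mono_set (fun t ht => lt_trans hyinv ht)
  have heq : ∫ t in Ioi (2:ℝ), Fi 3 s y t
      = (∫ t in Ioc (2:ℝ) (1/y), Fi 3 s y t) + ∫ t in Ioi (1/y), Fi 3 s y t := by
    rw [← hsplit, setIntegral_union (Ioc_disjoint_Ioi le_rfl) measurableSet_Ioi hint1 hint2]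
  rw [heq]
  have hP1 : ∫ t in Ioc (2:ℝ) (1/y), Fi 3 s y t ≤ 4*(-Real.log y) := by
    have hInv : IntegrableOn (fun t : ℝ => 4 * t⁻¹) (Ioc (2:ℝ) (1/y)) := by
      apply Integrable.const_mul
      have hii : IntervalIntegrable (fun t : ℝ => t⁻¹) volume 2 (1/y) := by
        apply intervalIntegral.intervalIntegrable_inv ?_ continuousOn_id
        intro x hx
        rw [uIcc_of_le hyinv.le] at hx
        exact (lt_of_lt_of_le (by norm_num) hx.1).ne'
      exact (intervalIntegrable_iff_integrableOn_Ioc_of_le hyinv.le).mp hii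
    have h1 : ∫ t in Ioc (2:ℝ) (1/y), Fi 3 s y t ≤ ∫ t in Ioc (2:ℝ) (1/y), 4 * t⁻¹ := by
      apply setIntegral_mono_on hint1 hInv measurableSet_Ioc
      intro t ht
      have ht2 : (2:ℝ) ≤ t := ht.1.le
      have ht0 : (0:ℝ) < t := by linarith
      calc Fi 3 s y t ≤ 4 * Real.exp (-t*y) / t := Fi_le_tail3 le_rfl hs ht2
        _ ≤ 4 * t⁻¹ := by
            rw [div_eq_mul_inv, mul_assoc]
            apply mul_le_mul_of_nonneg_left _ (by norm_num)
            apply mul_le_of_le_one_left (by positivity)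
            exact Real.exp_le_one_iff.mpr (by nlinarith)
    refine h1.trans ?_
    rw [← intervalIntegral.integral_of_le hyinv.le, intervalIntegral.integral_const_mul,
      integral_inv_of_pos (by norm_num) (by positivity)]
    have h2 : Real.log ((1/y)/2) ≤ -Real.log y := by
      rw [← Real.log_inv, ← one_div]
      apply Real.log_le_log (by positivity)
      rw [div_le_iff₀ (by norm_num)]
      rw [le_mul_iff_one_le_right (by positivity)]
      norm_num
    linarith
  have hP2 : ∫ t in Ioi (1/y), Fi 3 s y t ≤ 2 := by
    have h1 : ∫ t in Ioi (1/y), Fi 3 s y t ≤ ∫ t in Ioi (1/y), 4*y * Real.exp (-t*y) := by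
      apply setIntegral_mono_on hint2 ((intOn_expy hy _).const_mul _) measurableSet_Ioi
      intro t ht
      have ht1 : 1/y < t := ht
      have ht0 : (0:ℝ) < t := lt_trans (by positivity) ht1
      calc Fi 3 s y t ≤ 4 * Real.exp (-t*y) / t := Fi_le_tail3 le_rfl hs (by linarith)
        _ ≤ 4*y * Real.exp (-t*y) := by
            rw [div_le_iff₀ ht0]
            have hty : 1 ≤ y * t := by
              rw [mul_comm]
              exact (div_le_iff₀ hy).mp ht1.le
            nlinarith [Real.exp_nonneg (-t*y)]
    refine h1.trans ?_
    rw [integral_const_mul, integral_expy hy]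
    have : -(1/y)*y = -1 := by field_simp
    rw [this]
    have h2 : Real.exp (-1) ≤ 1/2 := by
      rw [Real.exp_neg]
      rw [inv_le_comm₀ (Real.exp_pos 1) (by norm_num)]
      have := Real.add_one_le_exp 1
      linarith
    have h3 : 4*y * (Real.exp (-1)/y) = 4 * Real.exp (-1) := by field_simp
    rw [h3]; linarith
  linarith

lemma Ifun_split {n : ℕ} (hn : n ≤ 3) {s y : ℝ} (hs : 0 < s) (hy : 0 < y) :
    ∫ t in Ioi (0:ℝ), Fi n s y t
      = (∫ t in Ioc (0:ℝ) (1/2), Fi n s y t) + (∫ t in Ioc (1/2:ℝ) 2, Fi n s y t)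
        + ∫ t in Ioi (2:ℝ), Fi n s y t := by
  have h02 := intOn_Ioc02 (n := n) (y := y) hs
  have hA : IntegrableOn (Fi n s y) (Ioc (0:ℝ) (1/2)) :=
    h02.mono_set (fun t ht => ⟨ht.1, ht.2.trans (by norm_num)⟩)
  have hB : IntegrableOn (Fi n s y) (Ioc (1/2:ℝ) 2) :=
    h02.mono_set (fun t ht => ⟨lt_trans (by norm_num) ht.1, ht.2⟩)
  have hC := intOn_tail hn hs hy
  rw [← Ioc_union_Ioi_eq_Ioi (by norm_num : (0:ℝ) ≤ 2),
    setIntegral_union (Ioc_disjoint_Ioi le_rfl) measurableSet_Ioi h02 hC]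
  congr 1
  rw [← Ioc_union_Ioc_eq_Ioc (by norm_num : (0:ℝ) ≤ 1/2) (by norm_num : (1/2:ℝ) ≤ 2),
    setIntegral_union (Ioc_disjoint_Ioc_of_le le_rfl) measurableSet_Ioc hA hB]

lemma piece_nonneg {n : ℕ} {s y a b : ℝ} (ha : 0 ≤ a) :
    0 ≤ ∫ t in Ioc a b, Fi n s y t :=
  setIntegral_nonneg measurableSet_Ioc (fun t ht => Fi_nonneg (ha.trans ht.1.le))

lemma tail_nonneg {n : ℕ} {s y a : ℝ} (ha : 0 ≤ a) :
    0 ≤ ∫ t in Ioi a, Fi n s y t :=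
  setIntegral_nonneg measurableSet_Ioi (fun t ht => Fi_nonneg (ha.trans (le_of_lt ht)))

lemma haA_bound {n : ℕ} (hn : n ≤ 3) {s y : ℝ} (hs : 0 < s) (hs1 : s ≤ 1) (hy : 0 < y) :
    s/π * ∫ t in Ioc (0:ℝ) (1/2), Fi n s y t ≤ 60*s/(1+y^(n+1)) := by
  have hY : 0 < 1 + y^(n+1) := by positivity
  have h1 : s/π * ∫ t in Ioc (0:ℝ) (1/2), Fi n s y t ≤ s/π * (180/(1+y^(n+1))) :=
    mul_le_mul_of_nonneg_left (bndA hn hs hy) (by positivity)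
  refine h1.trans ?_
  have heq : s/π * (180/(1+y^(n+1))) = 180*s/(π*(1+y^(n+1))) := by
    rw [div_mul_div_comm]; ring_nf
  rw [heq, div_le_div_iff₀ (by positivity) hY]
  nlinarith [mul_nonneg (mul_nonneg hs.le hY.le)
    (by linarith [Real.pi_gt_three] : (0:ℝ) ≤ π - 3)]

lemma haB_bound {n : ℕ} (hn : n ≤ 3) {s y : ℝ} (hs : 0 < s) (hy : 0 < y) :
    s/π * ∫ t in Ioc (1/2:ℝ) 2, Fi n s y t ≤ 32*Real.exp (-y/2) := by
  have h1 : s/π * ∫ t in Ioc (1/2:ℝ) 2, Fi n s y t ≤ s/π * (32*π*Real.exp (-y/2)/s) :=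
    mul_le_mul_of_nonneg_left (bndB hn hs hy) (by positivity)
  refine h1.trans ?_
  have : s/π * (32*π*Real.exp (-y/2)/s) = 32*Real.exp (-y/2) := by
    field_simp
  rw [this]

lemma sdivpi {s : ℝ} (hs : 0 < s) (hs1 : s ≤ 1) : s/π ≤ 1/3 := by
  rw [div_le_div_iff₀ Real.pi_pos (by norm_num)]
  nlinarith [Real.pi_gt_three]

lemma main12 {n : ℕ} (hn : n ≤ 2) {s y : ℝ} (hs : 0 < s) (hs1 : s ≤ 1) (hy : 0 < y) :
    s/π * ∫ t in Ioi (0:ℝ), Fi n s y t ≤ 300*s/(1+y^(n+1)) + 300*Real.exp (-y/2) := by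
  have hn3 : n ≤ 3 := hn.trans (by norm_num)
  rw [Ifun_split hn3 hs hy]
  have haC : s/π * ∫ t in Ioi (2:ℝ), Fi n s y t ≤ (1/3) * (2*Real.exp (-y/2)) :=
    mul_le_mul (sdivpi hs hs1) (bndC12 hn hs hy) (tail_nonneg (by norm_num)) (by norm_num)
  have hA := haA_bound hn3 hs hs1 hy
  have hB := haB_bound hn3 hs hy
  have hY : (0:ℝ) < 1 + y^(n+1) := by positivity
  have hsY : 0 ≤ s/(1+y^(n+1)) := by positivity
  have hE : 0 ≤ Real.exp (-y/2) := Real.exp_nonneg _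
  have hdist : s/π * ((∫ t in Ioc (0:ℝ) (1/2), Fi n s y t) + (∫ t in Ioc (1/2:ℝ) 2, Fi n s y t)
      + ∫ t in Ioi (2:ℝ), Fi n s y t)
      = s/π * (∫ t in Ioc (0:ℝ) (1/2), Fi n s y t)
        + s/π * (∫ t in Ioc (1/2:ℝ) 2, Fi n s y t)
        + s/π * ∫ t in Ioi (2:ℝ), Fi n s y t := by ring
  rw [hdist]
  have h60 : 60*s/(1+y^(n+1)) = 60*(s/(1+y^(n+1))) := by ring
  have h300 : 300*s/(1+y^(n+1)) = 300*(s/(1+y^(n+1))) := by ring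
  rw [h60] at hA
  rw [h300]
  linarith

lemma arith150 {s L Q : ℝ} (h : 0 ≤ s*L) (hQ : 0 < Q) (hQ2 : Q ≤ 2) :
    150*(s*L) ≤ 300*s*L/Q := by
  rw [le_div_iff₀ hQ]; nlinarith

lemma arithA {s u : ℝ} (hs : 0 ≤ s) (hu : 0 ≤ u) : 60*s/(1+u) ≤ 60*s := by
  rw [div_le_iff₀ (by linarith)]; nlinarith

lemma main3 {s y : ℝ} (hs : 0 < s) (hs1 : s ≤ 1) (hy : 0 < y) :
    s/π * ∫ t in Ioi (0:ℝ), Fi 3 s y t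
      ≤ 300*s*|Real.log y|/(1+y^4*|Real.log y|) + 300*Real.exp (-y/2) := by
  have hL0 : 0 ≤ |Real.log y| := abs_nonneg _
  have hQ : 0 < 1+y^4*|Real.log y| := by positivity
  have hT1 : 0 ≤ 300*s*|Real.log y|/(1+y^4*|Real.log y|) := by positivity
  have hE : 0 ≤ Real.exp (-y/2) := Real.exp_nonneg _
  rw [Ifun_split le_rfl hs hy]
  have hA := haA_bound le_rfl hs hs1 hy
  norm_num only at hA
  have hB := haB_bound le_rfl hs hy
  set A := ∫ t in Ioc (0:ℝ) (1/2), Fi 3 s y t with hAdef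
  set B := ∫ t in Ioc (1/2:ℝ) 2, Fi 3 s y t with hBdef
  set Cp := ∫ t in Ioi (2:ℝ), Fi 3 s y t with hCdef
  have hdist : s/π * (A + B + Cp) = s/π*A + s/π*B + s/π*Cp := by ring
  rw [hdist]
  rcases le_or_gt (1/2 : ℝ) y with hcase | hcase
  · -- y ≥ 1/2
    have hC : s/π * Cp ≤ (1/3)*(4*Real.exp (-y/2)) :=
      mul_le_mul (sdivpi hs hs1) (bndC3a hs hcase) (tail_nonneg (by norm_num)) (by norm_num)
    rcases le_or_gt y 2 with hy2 | hy2
    · -- 1/2 ≤ y ≤ 2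
      have hexp1 : Real.exp (-1) ≤ Real.exp (-y/2) := Real.exp_le_exp.mpr (by linarith)
      have hexp3 : (1:ℝ)/3 ≤ Real.exp (-1) := by
        rw [Real.exp_neg]
        have h3 : Real.exp 1 ≤ 3 := by linarith [Real.exp_one_lt_d9]
        have hmul : Real.exp 1 * (Real.exp 1)⁻¹ = 1 := mul_inv_cancel₀ (Real.exp_pos 1).ne'
        nlinarith [mul_nonneg (inv_pos.mpr (Real.exp_pos 1)).le
          (by linarith : (0:ℝ) ≤ 3 - Real.exp 1)]
      have hA' : 60*s/(1+y^4) ≤ 60 := by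
        rw [div_le_iff₀ (by positivity)]
        nlinarith [pow_nonneg hy.le 4]
      have h60 : (60:ℝ) ≤ 180*Real.exp (-y/2) := by linarith
      linarith
    · -- y > 2
      have hlogpos : 0 < Real.log y := Real.log_pos (by linarith)
      have hLeq : |Real.log y| = Real.log y := abs_of_pos hlogpos
      have hL07 : (0.69:ℝ) ≤ |Real.log y| := by
        rw [hLeq]
        have h2 : Real.log 2 ≤ Real.log y := Real.log_le_log (by norm_num) (by linarith)
        linarith [Real.log_two_gt_d9]
      have key : 60*s/(1+y^4) ≤ 300*s*|Real.log y|/(1+y^4*|Real.log y|) := by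
        rw [div_le_div_iff₀ (by positivity) hQ]
        nlinarith [mul_nonneg hs.le hL0, pow_nonneg hy.le 4,
          mul_nonneg (mul_nonneg hs.le hL0) (pow_nonneg hy.le 4),
          mul_nonneg hs.le (by linarith : (0:ℝ) ≤ |Real.log y| - 0.69),
          mul_nonneg (mul_nonneg hs.le (by linarith : (0:ℝ) ≤ |Real.log y| - 0.69)) (pow_nonneg hy.le 4)]
      linarith
  · -- y < 1/2
    have hlogneg : Real.log y < 0 := Real.log_neg hy (by linarith)
    have hLeq : |Real.log y| = -Real.log y := abs_of_neg hlogneg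
    have hCb : Cp ≤ 4*|Real.log y| + 2 := by
      rw [hLeq]; exact bndC3b hs hy hcase
    have hC : s/π * Cp ≤ (s/3)*(4*|Real.log y| + 2) := by
      apply mul_le_mul _ hCb (tail_nonneg (by norm_num)) (by positivity)
      exact div_le_div_of_nonneg_left hs.le (by norm_num) (by linarith [Real.pi_gt_three])
    have hCexp : (s/3)*(4*|Real.log y| + 2) = (4/3)*(s*|Real.log y|) + (2/3)*s := by ring
    rw [hCexp] at hC
    have hL07 : (0.69:ℝ) ≤ |Real.log y| := by
      rw [hLeq]
      have h2 : Real.log y ≤ Real.log (1/2) := Real.log_le_log hy (by linarith)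
      rw [show (1/2:ℝ) = 2⁻¹ by norm_num, Real.log_inv] at h2
      linarith [Real.log_two_gt_d9]
    have hyL : y * |Real.log y| ≤ 1 := by
      have h1 := Real.log_le_sub_one_of_pos (inv_pos.mpr hy)
      rw [Real.log_inv] at h1
      rw [hLeq]
      have h2 : -Real.log y ≤ y⁻¹ := by linarith [inv_pos.mpr hy]
      calc y * -Real.log y ≤ y * y⁻¹ := mul_le_mul_of_nonneg_left h2 hy.le
        _ = 1 := mul_inv_cancel₀ hy.ne'
    have hQ2 : 1+y^4*|Real.log y| ≤ 2 := by
      have h3 : y^4*|Real.log y| = y^3*(y*|Real.log y|) := by ring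
      have h4 : y^3*(y*|Real.log y|) ≤ y^3 := by
        nlinarith [pow_nonneg hy.le 3]
      have h5 : y^3 ≤ 1 := pow_le_one₀ hy.le (by linarith)
      linarith
    have h150 : 150*(s*|Real.log y|) ≤ 300*s*|Real.log y|/(1+y^4*|Real.log y|) :=
      arith150 (mul_nonneg hs.le hL0) hQ hQ2
    have hA' : 60*s/(1+y^4) ≤ 60*s := arithA hs.le (pow_nonneg hy.le 4)
    have hsL : 0.69*s ≤ s*|Real.log y| := by
      have := mul_le_mul_of_nonneg_left hL07 hs.le
      linarith [this]
    linarith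

end Helpers

/-- Bounds on the fundamental solution of the linearised operator and
its first two derivatives. -/
theorem fundamental_solution_bounds :
    ∃ C : ℝ, 0 < C ∧ ∀ α ∈ Set.Ioc (0:ℝ) (Real.pi/2), ∀ x : ℝ, x ≠ 0 →
      (0 ≤ Real.sin α / Real.pi * Ifun 1 α x ∧
        Real.sin α / Real.pi * Ifun 1 α x ≤
          C * Real.sin α / (1 + x^2) + C * Real.exp (-|x|/2)) ∧
      (0 ≤ Real.sin α / Real.pi * Ifun 2 α x ∧
        Real.sin α / Real.pi * Ifun 2 α x ≤
          C * Real.sin α / (1 + |x|^3) + C * Real.exp (-|x|/2)) ∧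
      (0 ≤ Real.sin α / Real.pi * Ifun 3 α x ∧
        Real.sin α / Real.pi * Ifun 3 α x ≤
          C * Real.sin α * abs (Real.log (abs x)) / (1 + x^4 * abs (Real.log (abs x))) +
            C * Real.exp (-|x|/2)) := by
  refine ⟨300, by norm_num, ?_⟩
  intro α hα x hx
  have hs : 0 < Real.sin α :=
    Real.sin_pos_of_pos_of_lt_pi hα.1 (lt_of_le_of_lt hα.2 (half_lt_self Real.pi_pos))
  have hs1 : Real.sin α ≤ 1 := Real.sin_le_one α
  have hy : 0 < |x| := abs_pos.mpr hx
  have hIfun : ∀ n : ℕ, Ifun n α x = ∫ t in Set.Ioi (0:ℝ), Fi n (Real.sin α) |x| t :=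
    fun n => rfl
  have hnn : ∀ n : ℕ, 0 ≤ Real.sin α / π * Ifun n α x := by
    intro n
    apply mul_nonneg (div_nonneg hs.le Real.pi_pos.le)
    rw [hIfun]
    exact tail_nonneg le_rfl
  refine ⟨⟨hnn 1, ?_⟩, ⟨hnn 2, ?_⟩, ⟨hnn 3, ?_⟩⟩
  · have h := main12 (by norm_num : (1:ℕ) ≤ 2) hs hs1 hy
    rw [hIfun 1]
    simpa [sq_abs] using h
  · have h := main12 le_rfl hs hs1 hy
    rw [hIfun 2]
    simpa using h
  · have h := main3 hs hs1 hy
    have hx4 : |x|^4 = x^4 := by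
      rw [pow_abs, abs_of_nonneg (by positivity : (0:ℝ) ≤ x^4)]
    rw [hIfun 3, ← hx4]
    exact h
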